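/- Let p be an odd prime and n ≥ 1 an integer. If p divides n then |𝔰(p,n)| ≤ 3p²/(p−1)³, and if p does not divide n then |𝔰(p,n)| ≤ (p²/(p−1)³) · (1 + 7/p). -/

import Mathlib

open Finset

/-- `e_q(x) = exp(2πix/q)` evaluated at the integer `x = a·h²`, summed over a reduced
residue system: `S_q(a) = ∑_{1 ≤ h ≤ q, gcd(h,q)=1} e_q(a h²)`. -/
noncomputable def Sq (q : ℕ) (a : ℤ) : ℂ :=
  ∑ h ∈ (Finset.Icc 1 q).filter (fun h => Nat.gcd h q = 1),
    Complex.exp (2 * (Real.pi : ℂ) * Complex.I * ((a : ℂ) * (h : ℂ) ^ 2) / (q : ℂ))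

/-- The singular series coefficient
`𝔰(q,n) = φ(q)⁻³ ∑_{1 ≤ a ≤ q, gcd(a,q)=1} S_q(a)³ e_q(−an)`. -/
noncomputable def sfrak (q : ℕ) (n : ℤ) : ℂ :=
  ((q.totient : ℂ)) ⁻¹ ^ 3 *
    ∑ a ∈ (Finset.Icc 1 q).filter (fun a => Nat.gcd a q = 1),
      (Sq q a) ^ 3 *
        Complex.exp (-(2 * (Real.pi : ℂ) * Complex.I * ((a : ℂ) * (n : ℂ)) / (q : ℂ)))

lemma icc_mem_lt {p : ℕ} (hp : p.Prime) {h : ℕ}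
    (hh : h ∈ (Finset.Icc 1 p).filter (fun h => Nat.gcd h p = 1)) : 1 ≤ h ∧ h < p := by
  simp only [mem_filter, mem_Icc] at hh
  obtain ⟨⟨h1, h2⟩, h3⟩ := hh
  refine ⟨h1, lt_of_le_of_ne h2 fun e => ?_⟩
  subst e
  rw [Nat.gcd_self] at h3
  exact hp.one_lt.ne' h3

lemma sum_icc_eq_sum_ne_zero {p : ℕ} [inst : Fact p.Prime] (F : ZMod p → ℂ) :
    ∑ h ∈ (Finset.Icc 1 p).filter (fun h => Nat.gcd h p = 1), F (h : ZMod p)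
      = ∑ x ∈ Finset.univ.filter (fun x : ZMod p => x ≠ 0), F x := by
  have hp := inst.out
  refine Finset.sum_nbij' (fun h => (h : ZMod p)) (fun x => x.val) ?_ ?_ ?_ ?_ ?_
  · intro h hh
    obtain ⟨h1, h2⟩ := icc_mem_lt hp hh
    simp only [mem_filter, mem_univ, true_and]
    rw [Ne, ZMod.natCast_eq_zero_iff]
    intro hdvd
    have := Nat.le_of_dvd (by omega) hdvd
    omega
  · intro x hx
    simp only [mem_filter, mem_univ, true_and] at hx
    have hv : x.val ≠ 0 := by simpa [ZMod.val_eq_zero] using hx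
    have hvlt : x.val < p := ZMod.val_lt x
    simp only [mem_filter, mem_Icc]
    refine ⟨⟨by omega, by omega⟩, ?_⟩
    rw [Nat.coprime_comm.mp]
    exact (hp.coprime_iff_not_dvd.mpr (fun hd => by have := Nat.le_of_dvd (by omega) hd; omega))
  · intro h hh
    obtain ⟨h1, h2⟩ := icc_mem_lt hp hh
    exact ZMod.val_cast_of_lt h2
  · intro x hx
    exact ZMod.natCast_zmod_val x
  · intro h hh
    rfl

noncomputable def qc (p : ℕ) [Fact p.Prime] : MulChar (ZMod p) ℂ :=
  (quadraticChar (ZMod p)).ringHomComp (Int.castRingHom ℂ)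

noncomputable def gS (p : ℕ) [Fact p.Prime] : ℂ := gaussSum (qc p) ZMod.stdAddChar

lemma qc_sq_one {p : ℕ} [Fact p.Prime] {b : ZMod p} (hb : b ≠ 0) :
    qc p b * qc p b = 1 := by
  rcases quadraticChar_dichotomy hb with h | h <;>
    simp [qc, MulChar.ringHomComp_apply, h]

lemma gauss_shift {p : ℕ} [Fact p.Prime] {b : ZMod p} (hb : b ≠ 0) :
    gaussSum (qc p) (AddChar.mulShift ZMod.stdAddChar b) = qc p b * gS p := by
  have hu : IsUnit b := Ne.isUnit hb
  have h := gaussSum_mulShift (qc p) (ZMod.stdAddChar (N := p)) hu.unit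
  rw [hu.unit_spec] at h
  calc gaussSum (qc p) (AddChar.mulShift ZMod.stdAddChar b)
      = (qc p b * qc p b) * gaussSum (qc p) (AddChar.mulShift ZMod.stdAddChar b) := by
        rw [qc_sq_one hb, one_mul]
    _ = qc p b * (qc p b * gaussSum (qc p) (AddChar.mulShift ZMod.stdAddChar b)) := by ring
    _ = qc p b * gS p := by rw [h]; rfl

lemma S_val {p : ℕ} [Fact p.Prime] (hp2 : p ≠ 2) {b : ZMod p} (hb : b ≠ 0) :
    ∑ x ∈ Finset.univ.filter (fun x : ZMod p => x ≠ 0), ZMod.stdAddChar (b * x ^ 2)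
      = qc p b * gS p - 1 := by
  have hchar : ringChar (ZMod p) ≠ 2 := by rwa [ZMod.ringChar_zmod_n]
  have h0 : ∑ x ∈ Finset.univ.filter (fun x : ZMod p => x ≠ 0), ZMod.stdAddChar (b * x ^ 2)
      = (∑ x : ZMod p, ZMod.stdAddChar (b * x ^ 2)) - 1 := by
    rw [Finset.filter_ne', Finset.sum_erase_eq_sub (mem_univ 0)]
    norm_num
  rw [h0]
  have hfib : (∑ x : ZMod p, ZMod.stdAddChar (b * x ^ 2))
      = ∑ t : ZMod p, (((quadraticChar (ZMod p) t + 1 : ℤ) : ℂ)) * ZMod.stdAddChar (b * t) := by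
    rw [← Finset.sum_fiberwise Finset.univ (fun x : ZMod p => x ^ 2)
      (fun x => ZMod.stdAddChar (b * x ^ 2))]
    refine Finset.sum_congr rfl fun t _ => ?_
    rw [Finset.sum_congr rfl (fun x hx => by rw [(Finset.mem_filter.mp hx).2] :
        ∀ x ∈ Finset.univ.filter (fun x : ZMod p => x ^ 2 = t),
          ZMod.stdAddChar (b * x ^ 2) = ZMod.stdAddChar (b * t)),
      Finset.sum_const, nsmul_eq_mul]
    congr 1
    have hc := quadraticChar_card_sqrts hchar t
    rw [Set.toFinset_setOf] at hc
    exact_mod_cast congrArg (Int.cast : ℤ → ℂ) hc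
  rw [hfib]
  have hsplit : ∑ t : ZMod p, (((quadraticChar (ZMod p) t + 1 : ℤ) : ℂ)) * ZMod.stdAddChar (b * t)
      = (∑ t : ZMod p, qc p t * ZMod.stdAddChar (b * t))
        + ∑ t : ZMod p, ZMod.stdAddChar (b * t) := by
    rw [← Finset.sum_add_distrib]
    refine Finset.sum_congr rfl fun t _ => ?_
    push_cast
    rw [add_mul, one_mul]
    rfl
  rw [hsplit]
  have h1 : (∑ t : ZMod p, qc p t * ZMod.stdAddChar (b * t))
      = gaussSum (qc p) (AddChar.mulShift ZMod.stdAddChar b) := by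
    simp [gaussSum, AddChar.mulShift_apply]
  have h2 := AddChar.sum_mulShift (R := ZMod p) b (ZMod.isPrimitive_stdAddChar p)
  rw [if_neg hb] at h2
  push_cast at h2
  have h2' : (∑ t : ZMod p, ZMod.stdAddChar (b * t)) = 0 := by
    rw [← h2]
    exact Finset.sum_congr rfl fun t _ => by rw [mul_comm]
  rw [h1, h2', gauss_shift hb, add_zero]

lemma Sq_eq {p : ℕ} [Fact p.Prime] (a : ℤ) :
    Sq p a = ∑ x ∈ Finset.univ.filter (fun x : ZMod p => x ≠ 0),
      ZMod.stdAddChar ((a : ZMod p) * x ^ 2) := by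
  rw [Sq, ← sum_icc_eq_sum_ne_zero (fun x => ZMod.stdAddChar ((a : ZMod p) * x ^ 2))]
  refine Finset.sum_congr rfl fun h _ => ?_
  have : ((a : ZMod p) * ((h : ℕ) : ZMod p) ^ 2) = (((a * (h:ℕ)^2 : ℤ)) : ZMod p) := by push_cast; ring
  rw [this, ZMod.stdAddChar_coe]
  congr 1
  push_cast
  ring

lemma sfrak_eq {p : ℕ} [Fact p.Prime] (n : ℤ) :
    sfrak p n = ((p.totient : ℂ))⁻¹ ^ 3 *
      ∑ b ∈ Finset.univ.filter (fun b : ZMod p => b ≠ 0),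
        (∑ x ∈ Finset.univ.filter (fun x : ZMod p => x ≠ 0),
            ZMod.stdAddChar (b * x ^ 2)) ^ 3 * ZMod.stdAddChar (-(b * (n : ZMod p))) := by
  rw [sfrak]
  congr 1
  rw [← sum_icc_eq_sum_ne_zero (fun b =>
    (∑ x ∈ Finset.univ.filter (fun x : ZMod p => x ≠ 0),
        ZMod.stdAddChar (b * x ^ 2)) ^ 3 * ZMod.stdAddChar (-(b * (n : ZMod p))))]
  refine Finset.sum_congr rfl fun a _ => ?_
  have h1 : Sq p (a : ℤ) = ∑ x ∈ Finset.univ.filter (fun x : ZMod p => x ≠ 0),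
      ZMod.stdAddChar (((a : ℕ) : ZMod p) * x ^ 2) := by
    rw [Sq_eq]
    norm_cast
  rw [← h1]
  congr 1
  have : (-(((a:ℕ) : ZMod p) * (n : ZMod p))) = ((-(a * n) : ℤ) : ZMod p) := by push_cast; ring
  rw [this, ZMod.stdAddChar_coe]
  congr 1
  push_cast
  ring

lemma qc_ne_one {p : ℕ} [Fact p.Prime] (hp2 : p ≠ 2) : qc p ≠ 1 := by
  have hchar : ringChar (ZMod p) ≠ 2 := by rwa [ZMod.ringChar_zmod_n]
  exact (MulChar.ringHomComp_ne_one_iff ((Int.castRingHom ℂ).injective_int)).mpr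
    (quadraticChar_ne_one hchar)

lemma gS_sq {p : ℕ} [Fact p.Prime] (hp2 : p ≠ 2) :
    gS p ^ 2 = qc p (-1) * p := by
  have := gaussSum_sq (qc_ne_one hp2) ((quadraticChar_isQuadratic (ZMod p)).comp _)
    (ZMod.isPrimitive_stdAddChar p)
  rwa [ZMod.card] at this

lemma qc_abs_one {p : ℕ} [Fact p.Prime] {b : ZMod p} (hb : b ≠ 0) :
    ‖qc p b‖ = 1 := by
  rcases quadraticChar_dichotomy hb with h | h <;>
    simp [qc, MulChar.ringHomComp_apply, h]

lemma abs_gS_sq {p : ℕ} [Fact p.Prime] (hp2 : p ≠ 2) :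
    ‖gS p‖ ^ 2 = p := by
  rw [← norm_pow, gS_sq hp2, norm_mul, qc_abs_one (by
    simp only [ne_eq, neg_eq_zero]
    exact one_ne_zero), one_mul, Complex.norm_natCast]

-- the T sum
lemma T_zero {p : ℕ} [Fact p.Prime] (hp2 : p ≠ 2) :
    ∑ b ∈ Finset.univ.filter (fun b : ZMod p => b ≠ 0),
      qc p b * ZMod.stdAddChar (-(b * (0 : ZMod p))) = 0 := by
  have hchar : ringChar (ZMod p) ≠ 2 := by rwa [ZMod.ringChar_zmod_n]
  have h := quadraticChar_sum_zero hchar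
  have h' : (∑ b : ZMod p, qc p b) = 0 := by
    have := congrArg (Int.cast : ℤ → ℂ) h
    push_cast at this
    simpa [qc, MulChar.ringHomComp_apply] using this
  calc ∑ b ∈ Finset.univ.filter (fun b : ZMod p => b ≠ 0),
        qc p b * ZMod.stdAddChar (-(b * (0 : ZMod p)))
      = ∑ b ∈ Finset.univ.filter (fun b : ZMod p => b ≠ 0), qc p b := by
        refine Finset.sum_congr rfl fun b _ => ?_
        simp
    _ = (∑ b : ZMod p, qc p b) - qc p 0 := by
        rw [Finset.filter_ne', Finset.sum_erase_eq_sub (mem_univ 0)]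
    _ = 0 := by rw [h', MulChar.map_zero, sub_zero]

lemma T_ne_zero {p : ℕ} [Fact p.Prime] {m : ZMod p} (hm : m ≠ 0) :
    ∑ b ∈ Finset.univ.filter (fun b : ZMod p => b ≠ 0),
      qc p b * ZMod.stdAddChar (-(b * m)) = qc p (-m) * gS p := by
  have hstep : ∑ b ∈ Finset.univ.filter (fun b : ZMod p => b ≠ 0),
      qc p b * ZMod.stdAddChar (-(b * m))
      = ∑ b : ZMod p, qc p b * ZMod.stdAddChar ((-m) * b) := by
    rw [Finset.filter_ne', Finset.sum_erase_eq_sub (mem_univ 0), MulChar.map_zero, zero_mul,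
      sub_zero]
    refine Finset.sum_congr rfl fun b _ => by ring_nf
  rw [hstep]
  have : (∑ b : ZMod p, qc p b * ZMod.stdAddChar ((-m) * b))
      = gaussSum (qc p) (AddChar.mulShift ZMod.stdAddChar (-m)) := by
    simp [gaussSum, AddChar.mulShift_apply]
  rw [this, gauss_shift (neg_ne_zero.mpr hm)]

lemma U_sum {p : ℕ} [Fact p.Prime] (m : ZMod p) :
    ∑ b ∈ Finset.univ.filter (fun b : ZMod p => b ≠ 0),
      ZMod.stdAddChar (-(b * m)) = (if m = 0 then (p : ℂ) else 0) - 1 := by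
  have h := AddChar.sum_mulShift (R := ZMod p) (-m) (ZMod.isPrimitive_stdAddChar p)
  have h2 : (∑ b : ZMod p, ZMod.stdAddChar (-(b * m)))
      = if m = 0 then (p : ℂ) else 0 := by
    calc (∑ b : ZMod p, ZMod.stdAddChar (-(b * m)))
        = ∑ b : ZMod p, ZMod.stdAddChar (b * (-m)) := by
          refine Finset.sum_congr rfl fun b _ => by ring_nf
      _ = if m = 0 then (p : ℂ) else 0 := by
          rw [h]
          simp [ZMod.card]
  rw [Finset.filter_ne', Finset.sum_erase_eq_sub (mem_univ 0), h2]
  norm_num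

lemma sfrak_formula {p : ℕ} [Fact p.Prime] (hp2 : p ≠ 2) (n : ℕ) :
    sfrak p (n : ℤ) = ((p.totient : ℂ))⁻¹ ^ 3 *
      ((gS p ^ 3 + 3 * gS p) *
          (∑ b ∈ Finset.univ.filter (fun b : ZMod p => b ≠ 0),
            qc p b * ZMod.stdAddChar (-(b * (n : ZMod p))))
        - (3 * gS p ^ 2 + 1) *
          (∑ b ∈ Finset.univ.filter (fun b : ZMod p => b ≠ 0),
            ZMod.stdAddChar (-(b * (n : ZMod p))))) := by
  rw [sfrak_eq]
  congr 1
  have hcast : (((n : ℤ) : ZMod p)) = (n : ZMod p) := Int.cast_natCast n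
  rw [hcast]
  have hexp : ∀ b ∈ Finset.univ.filter (fun b : ZMod p => b ≠ 0),
      (∑ x ∈ Finset.univ.filter (fun x : ZMod p => x ≠ 0),
          ZMod.stdAddChar (b * x ^ 2)) ^ 3 * ZMod.stdAddChar (-(b * (n : ZMod p)))
      = (gS p ^ 3 + 3 * gS p) * (qc p b * ZMod.stdAddChar (-(b * (n : ZMod p))))
        - (3 * gS p ^ 2 + 1) * ZMod.stdAddChar (-(b * (n : ZMod p))) := by
    intro b hb
    have hb' : b ≠ 0 := (Finset.mem_filter.mp hb).2
    rw [S_val hp2 hb']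
    have hci := qc_sq_one hb'
    set c := qc p b
    set g := gS p
    set w := (ZMod.stdAddChar (-(b * (n : ZMod p))) : ℂ)
    linear_combination (c * g ^ 3 - 3 * g ^ 2) * w * hci
  rw [Finset.sum_congr rfl hexp, Finset.sum_sub_distrib, ← Finset.mul_sum, ← Finset.mul_sum]

/-- For an odd prime p and n ≥ 1: if p ∣ n then `|𝔰(p,n)| ≤ 3p²/(p−1)³`,
and if p ∤ n then `|𝔰(p,n)| ≤ (p²/(p−1)³)(1 + 7/p)`. -/
theorem sfrak_prime_bounds (p : ℕ) (hp : p.Prime) (hodd : Odd p) (n : ℕ) (hn : 1 ≤ n) :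
    ((p ∣ n → ‖sfrak p n‖ ≤ 3 * (p : ℝ) ^ 2 / ((p : ℝ) - 1) ^ 3) ∧
      (¬ p ∣ n → ‖sfrak p n‖ ≤
        (p : ℝ) ^ 2 / ((p : ℝ) - 1) ^ 3 * (1 + 7 / (p : ℝ)))) := by
  haveI : Fact p.Prime := ⟨hp⟩
  have hp2 : p ≠ 2 := by
    rintro rfl
    exact (Nat.not_odd_iff_even.mpr (by norm_num)) hodd
  have hp3 : 3 ≤ p := by
    have := hp.two_le
    omega
  set P : ℝ := (p : ℝ) with hP
  have hPge : (3 : ℝ) ≤ P := by rw [hP]; exact_mod_cast hp3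
  have hP1 : (0 : ℝ) < P - 1 := by linarith
  have hpow3 : (0 : ℝ) < (P - 1) ^ 3 := pow_pos hP1 3
  have hpref : (0 : ℝ) ≤ ((P - 1))⁻¹ ^ 3 := pow_nonneg (inv_nonneg.mpr hP1.le) 3
  have habstot : ‖((p.totient : ℂ))⁻¹ ^ 3‖ = ((P - 1))⁻¹ ^ 3 := by
    rw [norm_pow, norm_inv, Complex.norm_natCast, Nat.totient_prime hp, Nat.cast_sub hp.one_lt.le,
      Nat.cast_one]
  have habsg2 : ‖gS p ^ 2‖ = P := by
    rw [norm_pow, abs_gS_sq hp2]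
  have h3g : ‖3 * gS p ^ 2 + 1‖ ≤ 3 * P + 1 := by
    refine (norm_add_le _ _).trans ?_
    rw [norm_mul, habsg2]
    norm_num
  constructor
  · -- p ∣ n
    intro hdvd
    have hm : (n : ZMod p) = 0 := (ZMod.natCast_eq_zero_iff n p).mpr hdvd
    rw [sfrak_formula hp2 n, hm, T_zero hp2, U_sum (0 : ZMod p), if_pos rfl, mul_zero, zero_sub,
      norm_mul, habstot, norm_neg, norm_mul]
    have habsp1 : ‖(p : ℂ) - 1‖ = P - 1 := by
      have : ((p : ℂ) - 1) = ((P - 1 : ℝ) : ℂ) := by rw [hP]; push_cast; ring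
      rw [this, Complex.norm_real, Real.norm_of_nonneg hP1.le]
    rw [habsp1]
    have hb1 : ‖3 * gS p ^ 2 + 1‖ * (P - 1) ≤ (3 * P + 1) * (P - 1) :=
      mul_le_mul_of_nonneg_right h3g hP1.le
    refine (mul_le_mul_of_nonneg_left hb1 hpref).trans ?_
    rw [inv_pow, ← div_eq_inv_mul, div_le_div_iff₀ hpow3 hpow3]
    nlinarith
  · -- p ∤ n
    intro hndvd
    have hm : (n : ZMod p) ≠ 0 := fun h =>
      hndvd ((ZMod.natCast_eq_zero_iff n p).mp h)
    rw [sfrak_formula hp2 n, T_ne_zero hm, U_sum (n : ZMod p), if_neg hm, norm_mul, habstot]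
    have hA : ‖(gS p ^ 3 + 3 * gS p) * (qc p (-(n : ZMod p)) * gS p)‖
        ≤ P * (P + 3) := by
      have hre : (gS p ^ 3 + 3 * gS p) * (qc p (-(n : ZMod p)) * gS p)
          = qc p (-(n : ZMod p)) * ((gS p ^ 2 + 3) * gS p ^ 2) := by ring
      rw [hre, norm_mul, qc_abs_one (neg_ne_zero.mpr hm), one_mul, norm_mul, habsg2]
      have h23 : ‖gS p ^ 2 + 3‖ ≤ P + 3 := by
        refine (norm_add_le _ _).trans ?_
        rw [habsg2]
        norm_num
      calc ‖gS p ^ 2 + 3‖ * P ≤ (P + 3) * P :=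
            mul_le_mul_of_nonneg_right h23 (by linarith)
        _ = P * (P + 3) := by ring
    have hform : (gS p ^ 3 + 3 * gS p) * (qc p (-(n : ZMod p)) * gS p)
        - (3 * gS p ^ 2 + 1) * ((0 : ℂ) - 1)
        = (gS p ^ 3 + 3 * gS p) * (qc p (-(n : ZMod p)) * gS p) + (3 * gS p ^ 2 + 1) := by
      ring
    rw [hform]
    have hsum : ‖(gS p ^ 3 + 3 * gS p) * (qc p (-(n : ZMod p)) * gS p)
        + (3 * gS p ^ 2 + 1)‖ ≤ P * (P + 3) + (3 * P + 1) :=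
      (norm_add_le _ _).trans (add_le_add hA h3g)
    refine (mul_le_mul_of_nonneg_left hsum hpref).trans ?_
    have hrhs : P ^ 2 / (P - 1) ^ 3 * (1 + 7 / P) = (P ^ 2 + 7 * P) / (P - 1) ^ 3 := by
      field_simp
    rw [hrhs, inv_pow, ← div_eq_inv_mul, div_le_div_iff₀ hpow3 hpow3]
    nlinarith
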